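/- Let t ≤ q be positive integers and consider tuples (σ_1,...,σ_N) of permutations in S_t. The tuple fails to be a complete derangement tuple (i.e., the permutations σ_1^{-1}σ_2, ..., σ_1^{-1}σ_N have a common fixed point) if and only if there exist π, ρ ∈ S_t and τ_1,...,τ_N ∈ S_{t-1} (the stabilizer of t) such that σ_i = π τ_i ρ for all i. -/

import Mathlib

/-- for `t ≤ q`, a tuple `(σ_0, …, σ_N)` of permutations in `S_t`
fails to be a complete derangement tuple (the permutations `σ_0⁻¹ σ_i` have a
common fixed point) iff it has the form `σ_i = π τ_i ρ` with `π, ρ ∈ S_t` and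
each `τ_i` in the stabilizer of the last point (a copy of `S_{t-1}`). -/
theorem stmt_14 (t q N : ℕ) (ht : 0 < t) (htq : t ≤ q)
    (σ : Fin (N + 1) → Equiv.Perm (Fin t)) :
    (∃ p : Fin t, ∀ i, ((σ 0)⁻¹ * σ i) p = p) ↔
      ∃ π ρ : Equiv.Perm (Fin t), ∃ τ : Fin (N + 1) → Equiv.Perm (Fin t),
        (∀ i, τ i ⟨t - 1, by omega⟩ = ⟨t - 1, by omega⟩) ∧ (∀ i, σ i = π * τ i * ρ) := by
  set e : Fin t := ⟨t - 1, by omega⟩ with he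
  constructor
  · rintro ⟨p, hp⟩
    set s : Equiv.Perm (Fin t) := Equiv.swap p e
    refine ⟨σ 0 * s⁻¹, s, fun i => s * (σ 0)⁻¹ * σ i * s⁻¹, fun i => ?_, fun i => ?_⟩
    · have : s⁻¹ e = p := by simp [s, Equiv.swap_apply_right]
      simp only [Equiv.Perm.mul_apply, this]
      have := hp i
      simp only [Equiv.Perm.mul_apply] at this
      rw [this]
      simp [s, Equiv.swap_apply_left]
    · group
  · rintro ⟨π, ρ, τ, hτ, hσ⟩
    refine ⟨ρ⁻¹ e, fun i => ?_⟩
    have h0 := hσ 0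
    have hi := hσ i
    simp only [h0, hi, mul_inv_rev, Equiv.Perm.mul_apply]
    rw [show ρ (ρ⁻¹ e) = e from Equiv.apply_symm_apply ρ e, show ∀ x, π⁻¹ (π x) = x from Equiv.symm_apply_apply π]
    rw [hτ i]
    have h00 : (τ 0)⁻¹ e = e := by
      rw [Equiv.Perm.inv_eq_iff_eq, hτ 0]
    rw [h00]
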